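/- In a rotationally asymmetric configuration of distinct points on a circle, if a point r other than the true leader is a confused leader, then the antipodal position of r is occupied by a point of the configuration. -/

import Mathlib

open Real

/-- Normalize a real number into `[0, 2π)` (representing an angle on the circle). -/
noncomputable def norm2pi (x : ℝ) : ℝ := (2 * π) * Int.fract (x / (2 * π))

/-- Clockwise angular distance from `a` to `b`, in `[0, 2π)`. -/
noncomputable def cwAngle (a b : ℝ) : ℝ := norm2pi (b - a)

/-- A configuration: a finite set of angles, all lying in `[0, 2π)`. -/
def OnCircle (s : Finset ℝ) : Prop := ∀ x ∈ s, 0 ≤ x ∧ x < 2 * π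

/-- Rotation of a configuration by angle `θ`. -/
noncomputable def rotConf (s : Finset ℝ) (θ : ℝ) : Finset ℝ :=
  s.image (fun x => norm2pi (x + θ))

/-- Rotational asymmetry: no nontrivial rotation preserves the configuration. -/
def RotAsym (s : Finset ℝ) : Prop := ∀ θ ∈ Set.Ioo 0 (2 * π), rotConf s θ ≠ s

/-- The clockwise gap (angle) sequence of the point `r` in configuration `s`:
consecutive clockwise angular gaps starting at `r`. -/
noncomputable def angleSeq (s : Finset ℝ) (r : ℝ) : List ℝ :=
  let l := ((s.erase r).image (fun x => cwAngle r x)).sort (· ≤ ·)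
  List.zipWith (fun u v => u - v) (l ++ [2 * π]) (0 :: l)

/-- Strict lexicographic order on lists of reals. -/
def ListLexLt (l₁ l₂ : List ℝ) : Prop := List.Lex (· < ·) l₁ l₂

/-- `r` is the true leader of `s`: its angle sequence is lexicographically strictly
smaller than that of every other point. -/
def IsTrueLeader (s : Finset ℝ) (r : ℝ) : Prop :=
  r ∈ s ∧ ∀ x ∈ s, x ≠ r → ListLexLt (angleSeq s r) (angleSeq s x)

/-- The antipodal position of a point `r`. -/
noncomputable def antip (r : ℝ) : ℝ := norm2pi (r + π)

/-- The configuration as seen from `r` assuming its antipodal position is empty. -/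
noncomputable def confC0 (s : Finset ℝ) (r : ℝ) : Finset ℝ := s.erase (antip r)

/-- The configuration as seen from `r` assuming its antipodal position is occupied. -/
noncomputable def confC1 (s : Finset ℝ) (r : ℝ) : Finset ℝ := insert (antip r) s

/-- A confused leader: both possibilities `C₀(r)` and `C₁(r)` are rotationally
asymmetric, and `r` is the true leader in exactly one of them. -/
def ConfusedLeader (s : Finset ℝ) (r : ℝ) : Prop :=
  r ∈ s ∧ RotAsym (confC0 s r) ∧ RotAsym (confC1 s r) ∧
    Xor' (IsTrueLeader (confC0 s r) r) (IsTrueLeader (confC1 s r) r)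

/-- A sure leader: `r` is the true leader in every possible (rotationally
asymmetric) configuration among `C₀(r)`, `C₁(r)`. -/
def SureLeader (s : Finset ℝ) (r : ℝ) : Prop :=
  r ∈ s ∧ (RotAsym (confC0 s r) → IsTrueLeader (confC0 s r) r) ∧
    (RotAsym (confC1 s r) → IsTrueLeader (confC1 s r) r)

/-- An expected leader is a sure leader or a confused leader. -/
def ExpectedLeader (s : Finset ℝ) (r : ℝ) : Prop := SureLeader s r ∨ ConfusedLeader s r

/-- `r'` is the first clockwise neighbor of `r` in `s`. -/
def IsCwNeighbor (s : Finset ℝ) (r r' : ℝ) : Prop :=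
  r' ∈ s ∧ r' ≠ r ∧ ∀ x ∈ s, x ≠ r → cwAngle r r' ≤ cwAngle r x

lemma norm2pi_nonneg (x : ℝ) : 0 ≤ norm2pi x :=
  mul_nonneg (le_of_lt Real.two_pi_pos) (Int.fract_nonneg _)

lemma norm2pi_lt (x : ℝ) : norm2pi x < 2 * π := by
  have h := Int.fract_lt_one (x / (2 * π))
  calc (2*π) * Int.fract (x / (2*π)) < (2*π) * 1 := by
        exact (mul_lt_mul_iff_right₀ Real.two_pi_pos).mpr h
    _ = 2*π := mul_one _

lemma norm2pi_eq_self {x : ℝ} (h0 : 0 ≤ x) (h2 : x < 2 * π) : norm2pi x = x := by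
  unfold norm2pi
  rw [Int.fract_eq_self.mpr ⟨by positivity, by rw [div_lt_one Real.two_pi_pos]; exact h2⟩]
  field_simp

lemma norm2pi_sub_floor (x : ℝ) : norm2pi x = x - 2*π*⌊x/(2*π)⌋ := by
  unfold norm2pi Int.fract
  have h : (2*π) ≠ 0 := ne_of_gt Real.two_pi_pos
  field_simp

lemma norm2pi_add_int (x : ℝ) (k : ℤ) : norm2pi (x + 2*π*k) = norm2pi x := by
  unfold norm2pi
  congr 1
  have h : (x + 2*π*k) / (2*π) = x/(2*π) + k := by
    field_simp
  rw [h, Int.fract_add_intCast]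

lemma norm2pi_eq_of_sub {x y : ℝ} (k : ℤ) (h : x - y = 2*π*k) : norm2pi x = norm2pi y := by
  have : x = y + 2*π*k := by linarith
  rw [this, norm2pi_add_int]

lemma norm2pi_eq_imp {x y : ℝ} (h : norm2pi x = norm2pi y) : ∃ k : ℤ, x - y = 2*π*k := by
  rw [norm2pi_sub_floor, norm2pi_sub_floor] at h
  exact ⟨⌊x/(2*π)⌋ - ⌊y/(2*π)⌋, by push_cast; linarith⟩

lemma norm2pi_norm2pi_add (x y : ℝ) : norm2pi (norm2pi x + y) = norm2pi (x + y) := by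
  apply norm2pi_eq_of_sub (-⌊x/(2*π)⌋)
  rw [norm2pi_sub_floor]
  push_cast; ring

lemma norm2pi_pi : norm2pi π = π :=
  norm2pi_eq_self (le_of_lt pi_pos) (by linarith [pi_pos])

lemma int_zero_of_small {k : ℤ} (h1 : -(2*π) < 2*π*k) (h2 : 2*π*k < 2*π) : k = 0 := by
  by_contra hk
  rcases lt_or_gt_of_ne hk with h | h
  · have hk1 : k ≤ -1 := by omega
    have : (k:ℝ) ≤ -1 := by exact_mod_cast hk1
    nlinarith [Real.two_pi_pos]
  · have hk1 : (1:ℤ) ≤ k := h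
    have : (1:ℝ) ≤ (k:ℝ) := by exact_mod_cast hk1
    nlinarith [Real.two_pi_pos]

lemma norm2pi_eq_norm2pi_iff {x y : ℝ} (hx0 : 0 ≤ x) (hx2 : x < 2*π) (hy0 : 0 ≤ y) (hy2 : y < 2*π) :
    norm2pi x = norm2pi y ↔ x = y := by
  constructor
  · intro h
    obtain ⟨k, hk⟩ := norm2pi_eq_imp h
    have hk0 : k = 0 := int_zero_of_small (by linarith) (by linarith)
    rw [hk0] at hk; push_cast at hk; linarith
  · intro h; rw [h]

-- clockwise angle lemmas
lemma cw_pos {z u : ℝ} (hz0 : 0 ≤ z) (hz2 : z < 2*π) (hu0 : 0 ≤ u) (hu2 : u < 2*π)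
    (hne : u ≠ z) : 0 < cwAngle z u := by
  rcases eq_or_lt_of_le (norm2pi_nonneg (u - z)) with h | h
  · exfalso
    have h0 : norm2pi (0:ℝ) = 0 := norm2pi_eq_self le_rfl Real.two_pi_pos
    obtain ⟨k, hk⟩ := norm2pi_eq_imp ((h.symm.trans h0.symm) :
      norm2pi (u - z) = norm2pi 0)
    have hk0 : k = 0 := int_zero_of_small (by linarith) (by linarith)
    rw [hk0] at hk; push_cast at hk
    exact hne (by linarith)
  · exact h

lemma cw_lt (z u : ℝ) : cwAngle z u < 2*π := norm2pi_lt _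

lemma cw_nonneg (z u : ℝ) : 0 ≤ cwAngle z u := norm2pi_nonneg _

lemma norm2pi_add_cw {z u : ℝ} (hu0 : 0 ≤ u) (hu2 : u < 2*π) :
    norm2pi (z + cwAngle z u) = u := by
  unfold cwAngle
  rw [add_comm, norm2pi_norm2pi_add, sub_add_cancel]
  exact norm2pi_eq_self hu0 hu2

/-- "A beats B": minimum of the symmetric difference belongs to A. -/
def MinDiff (A B : Finset ℝ) : Prop := ∃ m, m ∈ A ∧ m ∉ B ∧ ∀ v, v < m → (v ∈ A ↔ v ∈ B)

lemma lex_cc {x y : ℝ} {l l' : List ℝ} :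
    List.Lex (· < ·) (x :: l) (y :: l') ↔ x < y ∨ (x = y ∧ List.Lex (· < ·) l l') := by
  constructor
  · intro h
    cases h with
    | rel h => exact Or.inl h
    | cons h => exact Or.inr ⟨rfl, h⟩
  · rintro (h | ⟨rfl, h⟩)
    · exact List.Lex.rel h
    · exact List.Lex.cons h

lemma not_lex_nil {l : List ℝ} : ¬ List.Lex (· < ·) l [] := by
  intro h; cases h

lemma glex (c : ℝ) (l₁ : List ℝ) : ∀ (b : ℝ) (l₂ : List ℝ),
    l₁.Pairwise (· < ·) → l₂.Pairwise (· < ·) →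
    (∀ v ∈ l₁, b < v ∧ v < c) → (∀ v ∈ l₂, b < v ∧ v < c) → b < c →
    (List.Lex (· < ·)
      (List.zipWith (fun u v => u - v) (l₁ ++ [c]) (b :: l₁))
      (List.zipWith (fun u v => u - v) (l₂ ++ [c]) (b :: l₂))
      ↔ ∃ m, m ∈ l₁ ∧ m ∉ l₂ ∧ ∀ v, v < m → (v ∈ l₁ ↔ v ∈ l₂)) := by
  induction l₁ with
  | nil =>
    intro b l₂ _ hs₂ _ hb₂ hbc
    cases l₂ with
    | nil =>
      simp only [List.nil_append, List.zipWith]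
      constructor
      · intro h
        rcases lex_cc.mp h with h | ⟨_, h⟩
        · exact absurd h (lt_irrefl _)
        · exact absurd h not_lex_nil
      · rintro ⟨m, hm, _⟩; exact absurd hm (List.not_mem_nil)
    | cons a₂ t₂ =>
      have ha₂ := hb₂ a₂ (List.mem_cons_self)
      constructor
      · intro h
        exfalso
        rcases lex_cc.mp h with h | ⟨h, _⟩
        · linarith [ha₂.2, show c - b < a₂ - b from h]
        · linarith [ha₂.2, show c - b = a₂ - b from h]
      · rintro ⟨m, hm, _⟩; exact absurd hm (List.not_mem_nil)
  | cons a₁ t₁ ih =>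
    intro b l₂ hs₁ hs₂ hb₁ hb₂ hbc
    have ha₁ := hb₁ a₁ (List.mem_cons_self)
    obtain ⟨ht₁a, ht₁s⟩ := List.pairwise_cons.mp hs₁
    cases l₂ with
    | nil =>
      constructor
      · intro _
        refine ⟨a₁, List.mem_cons_self, List.not_mem_nil, fun v hv => ?_⟩
        simp only [List.mem_cons, List.not_mem_nil, iff_false]
        rintro (rfl | hvt)
        · exact absurd hv (lt_irrefl _)
        · linarith [ht₁a v hvt]
      · intro _
        exact List.Lex.rel (by linarith [ha₁.2] : a₁ - b < c - b)
    | cons a₂ t₂ =>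
      have ha₂ := hb₂ a₂ (List.mem_cons_self)
      obtain ⟨ht₂a, ht₂s⟩ := List.pairwise_cons.mp hs₂
      rcases lt_trichotomy a₁ a₂ with hlt | heq | hgt
      · -- a₁ < a₂ : both sides true
        constructor
        · intro _
          refine ⟨a₁, List.mem_cons_self, ?_, fun v hv => ?_⟩
          · simp only [List.mem_cons, not_or]
            exact ⟨ne_of_lt hlt, fun hc => absurd (ht₂a a₁ hc) (by linarith)⟩
          · simp only [List.mem_cons]
            constructor
            · rintro (rfl | hvt)
              · exact absurd hv (lt_irrefl _)
              · exact absurd (ht₁a v hvt) (by linarith)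
            · rintro (rfl | hvt)
              · exact absurd hv (by linarith)
              · exact absurd (ht₂a v hvt) (by linarith)
        · intro _
          exact List.Lex.rel (by linarith : a₁ - b < a₂ - b)
      · -- equal heads: recurse
        subst heq
        have hrec := ih a₁ t₂ ht₁s ht₂s
          (fun v hv => ⟨ht₁a v hv, (hb₁ v (List.mem_cons_of_mem _ hv)).2⟩)
          (fun v hv => ⟨ht₂a v hv, (hb₂ v (List.mem_cons_of_mem _ hv)).2⟩)
          ha₁.2
        constructor
        · intro h
          rcases lex_cc.mp h with h | ⟨_, h⟩
          · exact absurd h (lt_irrefl _)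
          · obtain ⟨m, hm₁, hm₂, hmv⟩ := hrec.mp h
            refine ⟨m, List.mem_cons_of_mem _ hm₁, ?_, fun v hv => ?_⟩
            · simp only [List.mem_cons, not_or]
              exact ⟨fun hc => absurd (ht₁a m hm₁) (by rw [hc]; exact lt_irrefl _), hm₂⟩
            · simp only [List.mem_cons]
              constructor
              · rintro (rfl | hvt)
                · exact Or.inl rfl
                · exact Or.inr ((hmv v hv).mp hvt)
              · rintro (rfl | hvt)
                · exact Or.inl rfl
                · exact Or.inr ((hmv v hv).mpr hvt)
        · rintro ⟨m, hm₁, hm₂, hmv⟩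
          apply lex_cc.mpr
          right
          refine ⟨rfl, hrec.mpr ⟨m, ?_, fun hc => hm₂ (List.mem_cons_of_mem _ hc), fun v hv => ?_⟩⟩
          · rcases List.mem_cons.mp hm₁ with rfl | h
            · exact absurd (List.mem_cons_self) hm₂
            · exact h
          · constructor
            · intro hvt
              rcases List.mem_cons.mp ((hmv v hv).mp (List.mem_cons_of_mem _ hvt)) with rfl | h
              · exact absurd (ht₁a v hvt) (lt_irrefl _)
              · exact h
            · intro hvt
              rcases List.mem_cons.mp ((hmv v hv).mpr (List.mem_cons_of_mem _ hvt)) with rfl | h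
              · exact absurd (ht₂a v hvt) (lt_irrefl _)
              · exact h
      · -- a₁ > a₂ : both sides false
        constructor
        · intro h
          exfalso
          rcases lex_cc.mp h with h | ⟨h, _⟩
          · linarith [show a₁ - b < a₂ - b from h]
          · linarith [show a₁ - b = a₂ - b from h]
        · rintro ⟨m, hm₁, hm₂, hmv⟩
          exfalso
          have hma : a₂ < m := by
            rcases List.mem_cons.mp hm₁ with rfl | h
            · exact hgt
            · linarith [ht₁a m h]
          have : a₂ ∈ a₁ :: t₁ := (hmv a₂ hma).mpr (List.mem_cons_self)
          rcases List.mem_cons.mp this with rfl | h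
          · exact absurd hgt (lt_irrefl _)
          · linarith [ht₁a a₂ h]

/-- The set of clockwise distances from `z` to the other points of `s`. -/
noncomputable def SDist (s : Finset ℝ) (z : ℝ) : Finset ℝ :=
  (s.erase z).image (fun x => cwAngle z x)

lemma sdist_range {s : Finset ℝ} (hs : OnCircle s) {z : ℝ} (hz0 : 0 ≤ z) (hz2 : z < 2*π) :
    ∀ v ∈ SDist s z, 0 < v ∧ v < 2*π := by
  intro v hv
  obtain ⟨u, hu, rfl⟩ := Finset.mem_image.mp hv
  have hu' := hs u (Finset.mem_of_mem_erase hu)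
  exact ⟨cw_pos hz0 hz2 hu'.1 hu'.2 (Finset.ne_of_mem_erase hu), cw_lt _ _⟩

/-- The bridge: lexicographic comparison of angle sequences is equivalent to
the min-symmetric-difference comparison of distance sets. -/
lemma lex_iff_minDiff {s : Finset ℝ} (hs : OnCircle s) {z z' : ℝ}
    (hz0 : 0 ≤ z) (hz2 : z < 2*π) (hz0' : 0 ≤ z') (hz2' : z' < 2*π) :
    ListLexLt (angleSeq s z) (angleSeq s z') ↔ MinDiff (SDist s z) (SDist s z') := by
  have h := glex (2*π) ((SDist s z).sort (· ≤ ·)) 0 ((SDist s z').sort (· ≤ ·))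
    (List.sortedLT_iff_pairwise.mp (Finset.sortedLT_sort _)) (List.sortedLT_iff_pairwise.mp (Finset.sortedLT_sort _))
    (fun v hv => sdist_range hs hz0 hz2 v (Finset.mem_sort (α := ℝ) (· ≤ ·) |>.mp hv))
    (fun v hv => sdist_range hs hz0' hz2' v (Finset.mem_sort (α := ℝ) (· ≤ ·) |>.mp hv))
    Real.two_pi_pos
  constructor
  · intro hL
    obtain ⟨m, hm₁, hm₂, hmv⟩ := h.mp hL
    refine ⟨m, (Finset.mem_sort (α := ℝ) (· ≤ ·)).mp hm₁,
      fun hc => hm₂ ((Finset.mem_sort (α := ℝ) (· ≤ ·)).mpr hc), fun v hv => ?_⟩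
    have := hmv v hv
    simpa [Finset.mem_sort] using this
  · rintro ⟨m, hm₁, hm₂, hmv⟩
    apply h.mpr
    refine ⟨m, (Finset.mem_sort (α := ℝ) (· ≤ ·)).mpr hm₁,
      fun hc => hm₂ ((Finset.mem_sort (α := ℝ) (· ≤ ·)).mp hc), fun v hv => ?_⟩
    have := hmv v hv
    simpa [Finset.mem_sort] using this

lemma minDiff_asymm {A B : Finset ℝ} (h₁ : MinDiff A B) (h₂ : MinDiff B A) : False := by
  obtain ⟨m, hmA, hmB, hmv⟩ := h₁
  obtain ⟨m', hm'B, hm'A, hm'v⟩ := h₂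
  rcases lt_trichotomy m m' with h | h | h
  · exact hmB ((hm'v m h).mpr hmA)
  · exact hm'A (h ▸ hmA)
  · exact hm'A ((hmv m' h).mpr hm'B)

/-- Membership in the distance set, via the representative point. -/
lemma mem_sdist {s : Finset ℝ} (hs : OnCircle s) {z : ℝ} (hz0 : 0 ≤ z) (hz2 : z < 2*π)
    (v : ℝ) : v ∈ SDist s z ↔ 0 < v ∧ v < 2*π ∧ norm2pi (z + v) ∈ s := by
  constructor
  · intro hv
    obtain ⟨u, hu, rfl⟩ := Finset.mem_image.mp hv
    have hu' := hs u (Finset.mem_of_mem_erase hu)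
    refine ⟨cw_pos hz0 hz2 hu'.1 hu'.2 (Finset.ne_of_mem_erase hu), cw_lt _ _, ?_⟩
    rw [norm2pi_add_cw hu'.1 hu'.2]
    exact Finset.mem_of_mem_erase hu
  · rintro ⟨hv0, hv2, hmem⟩
    apply Finset.mem_image.mpr
    refine ⟨norm2pi (z + v), Finset.mem_erase.mpr ⟨?_, hmem⟩, ?_⟩
    · intro hc
      have : norm2pi (z + v) = norm2pi (z + 0) := by
        rw [hc, add_zero]; exact (norm2pi_eq_self hz0 hz2).symm
      obtain ⟨k, hk⟩ := norm2pi_eq_imp this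
      have : k = 0 := int_zero_of_small (by linarith) (by linarith)
      rw [this] at hk; push_cast at hk; linarith
    · show norm2pi (norm2pi (z+v) - z) = v
      rw [sub_eq_add_neg, norm2pi_norm2pi_add]
      have : z + v + -z = v := by ring
      rw [this]
      exact norm2pi_eq_self (le_of_lt hv0) hv2

lemma sdist_insert_erase {s : Finset ℝ} (hs : OnCircle s) {z a : ℝ}
    (hz0 : 0 ≤ z) (hz2 : z < 2*π) (ha0 : 0 ≤ a) (ha2 : a < 2*π)
    (hans : a ∉ s) (haz : a ≠ z) :
    SDist s z = (SDist (insert a s) z).erase (cwAngle z a) := by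
  have h1 : (insert a s).erase z = insert a (s.erase z) := Finset.erase_insert_of_ne haz
  have h2 : SDist (insert a s) z = insert (cwAngle z a) (SDist s z) := by
    unfold SDist
    rw [h1, Finset.image_insert]
  rw [h2, Finset.erase_insert]
  intro hc
  have hsc : OnCircle s := hs
  have := (mem_sdist hsc hz0 hz2 (cwAngle z a)).mp hc
  rw [norm2pi_add_cw ha0 ha2] at this
  exact hans this.2.2

/-- Core combinatorial lemma: a true leader of `insert (antip r) s` is a true
leader of `s`. -/
lemma core_lemma (s : Finset ℝ) (hcirc : OnCircle s) (r : ℝ) (hr : r ∈ s)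
    (ha : antip r ∉ s) (hlead : IsTrueLeader (insert (antip r) s) r) :
    IsTrueLeader s r := by
  have hπ := Real.pi_pos
  have h2π := Real.two_pi_pos
  set a := antip r with hadef
  have hr0 : 0 ≤ r := (hcirc r hr).1
  have hr2 : r < 2*π := (hcirc r hr).2
  have ha0 : 0 ≤ a := norm2pi_nonneg _
  have ha2 : a < 2*π := norm2pi_lt _
  have hC1 : OnCircle (insert a s) := by
    intro x hx
    rcases Finset.mem_insert.mp hx with rfl | hx
    · exact ⟨ha0, ha2⟩
    · exact hcirc x hx
  have hcwra : cwAngle r a = π := by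
    show norm2pi (a - r) = π
    have : norm2pi (a - r) = norm2pi π := by
      rw [hadef]
      show norm2pi (norm2pi (r + π) - r) = norm2pi π
      rw [sub_eq_add_neg, norm2pi_norm2pi_add]
      congr 1; ring
    rw [this, norm2pi_pi]
  have har : a ≠ r := by
    intro h
    have : cwAngle r a = 0 := by
      rw [h]; show norm2pi (r - r) = 0
      rw [sub_self]; exact norm2pi_eq_self le_rfl h2π
    rw [hcwra] at this; linarith
  have hrC1 : r ∈ insert a s := Finset.mem_insert_of_mem hr
  -- shorthand membership lemmas
  have memr : ∀ v, v ∈ SDist (insert a s) r ↔ 0 < v ∧ v < 2*π ∧ norm2pi (r + v) ∈ insert a s :=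
    mem_sdist hC1 hr0 hr2
  -- leadership in MinDiff form
  have H : ∀ x ∈ insert a s, x ≠ r →
      MinDiff (SDist (insert a s) r) (SDist (insert a s) x) := by
    intro x hx hxr
    have hx' := hC1 x hx
    exact (lex_iff_minDiff hC1 hr0 hr2 hx'.1 hx'.2).mp (hlead.2 x hx hxr)
  have hπS : π ∈ SDist (insert a s) r := by
    rw [memr]
    refine ⟨hπ, by linarith, ?_⟩
    have : norm2pi (r + π) = a := hadef.symm
    rw [this]; exact Finset.mem_insert_self _ _
  refine ⟨hr, ?_⟩
  intro x hx hxr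
  have hx0 : 0 ≤ x := (hcirc x hx).1
  have hx2 : x < 2*π := (hcirc x hx).2
  have hxa : x ≠ a := fun h => ha (h ▸ hx)
  have hxC1 : x ∈ insert a s := Finset.mem_insert_of_mem hx
  have memx : ∀ v, v ∈ SDist (insert a s) x ↔ 0 < v ∧ v < 2*π ∧ norm2pi (x + v) ∈ insert a s :=
    mem_sdist hC1 hx0 hx2
  rw [lex_iff_minDiff hcirc hr0 hr2 hx0 hx2,
      sdist_insert_erase hcirc hr0 hr2 ha0 ha2 ha har,
      sdist_insert_erase hcirc hx0 hx2 ha0 ha2 ha (Ne.symm hxa), hcwra]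
  -- δ, e and their properties
  set δ := cwAngle r x with hδdef
  have hδ0 : 0 < δ := cw_pos hr0 hr2 hx0 hx2 hxr
  have hδ2 : δ < 2*π := cw_lt _ _
  have hxP : norm2pi (r + δ) = x := norm2pi_add_cw hx0 hx2
  set e := cwAngle x a with hedef
  have he0 : 0 < e := cw_pos hx0 hx2 ha0 ha2 (Ne.symm hxa)
  have he2 : e < 2*π := cw_lt _ _
  have haP : norm2pi (x + e) = a := norm2pi_add_cw ha0 ha2
  have heSx : e ∈ SDist (insert a s) x := by
    rw [memx]; exact ⟨he0, he2, by rw [haP]; exact Finset.mem_insert_self _ _⟩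
  have heπ : e ≠ π := by
    intro h
    -- then a = norm2pi (x + π) and a = norm2pi (r + π), so x = r
    have h1 : norm2pi (x + π) = a := by rw [← h]; exact haP
    have h2 : norm2pi (r + π) = a := hadef.symm
    obtain ⟨k, hk⟩ := norm2pi_eq_imp (h1.trans h2.symm)
    have hk0 : k = 0 := int_zero_of_small (by linarith) (by linarith)
    rw [hk0] at hk; push_cast at hk
    exact hxr (by linarith)
  obtain ⟨m, hmr, hmx, hmmin⟩ := H x hxC1 hxr
  have hmb := (memr m).mp hmr
  have hme : m ≠ e := fun h => hmx (h ▸ heSx)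
  rcases lt_trichotomy e π with heπlt | heq | heπgt
  · -- e < π
    rcases lt_or_gt_of_ne hme with hlt | hgt
    · -- m < e < π : witness m
      refine ⟨m, Finset.mem_erase.mpr ⟨by linarith, hmr⟩,
        fun hc => hmx (Finset.mem_of_mem_erase hc), fun v hv => ?_⟩
      rw [Finset.mem_erase, Finset.mem_erase]
      constructor
      · rintro ⟨_, hvr⟩
        exact ⟨by linarith, (hmmin v hv).mp hvr⟩
      · rintro ⟨_, hvx⟩
        exact ⟨by linarith, (hmmin v hv).mpr hvx⟩
    · -- e < m : witness e
      have heSr : e ∈ SDist (insert a s) r := (hmmin e hgt).mpr heSx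
      refine ⟨e, Finset.mem_erase.mpr ⟨heπ, heSr⟩,
        fun hc => (Finset.mem_erase.mp hc).1 rfl, fun v hv => ?_⟩
      rw [Finset.mem_erase, Finset.mem_erase]
      constructor
      · rintro ⟨_, hvr⟩
        exact ⟨by linarith, (hmmin v (by linarith)).mp hvr⟩
      · rintro ⟨_, hvx⟩
        exact ⟨by linarith, (hmmin v (by linarith)).mpr hvx⟩
  · exact absurd heq heπ
  · -- e > π
    have hδπ : π < δ := by
      rcases lt_trichotomy δ π with h | h | h
      · exfalso
        -- e = π - δ < π
        have : e = norm2pi (π - δ) := by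
          rw [hedef]
          show norm2pi (a - x) = norm2pi (π - δ)
          apply norm2pi_eq_of_sub (⌊(r+δ)/(2*π)⌋ - ⌊(r+π)/(2*π)⌋)
          have e1 : a = r + π - 2*π*⌊(r+π)/(2*π)⌋ := by rw [hadef]; exact norm2pi_sub_floor _
          have e2 : x = r + δ - 2*π*⌊(r+δ)/(2*π)⌋ := by rw [← hxP]; exact norm2pi_sub_floor _
          push_cast
          rw [e1, e2]; ring
        rw [this, norm2pi_eq_self (by linarith) (by linarith)] at heπgt
        linarith
      · exact absurd (by rw [← hxP, h]; exact hadef.symm : x = a) hxa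
      · exact h
    rcases lt_or_ge m π with hmπ | hπm
    · -- m < π < e : witness m
      refine ⟨m, Finset.mem_erase.mpr ⟨by linarith, hmr⟩,
        fun hc => hmx (Finset.mem_of_mem_erase hc), fun v hv => ?_⟩
      rw [Finset.mem_erase, Finset.mem_erase]
      constructor
      · rintro ⟨_, hvr⟩
        exact ⟨by linarith, (hmmin v hv).mp hvr⟩
      · rintro ⟨_, hvx⟩
        exact ⟨by linarith, (hmmin v hv).mpr hvx⟩
    · -- border argument : contradiction
      exfalso
      set τ := 2*π - δ with hτdef
      have hτ0 : 0 < τ := by simp [hτdef]; linarith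
      have hτπ : τ < π := by simp [hτdef]; linarith
      have hτSx : τ ∈ SDist (insert a s) x := by
        rw [memx]
        refine ⟨hτ0, by linarith, ?_⟩
        have : norm2pi (x + τ) = norm2pi r := by
          rw [← hxP, norm2pi_norm2pi_add]
          apply norm2pi_eq_of_sub 1
          push_cast; rw [hτdef]; ring
        rw [this, norm2pi_eq_self hr0 hr2]
        exact hrC1
      have hτSr : τ ∈ SDist (insert a s) r := (hmmin τ (by linarith)).mpr hτSx
      have hyb := (memr τ).mp hτSr
      set y := norm2pi (r + τ) with hydef
      have hyC1 : y ∈ insert a s := hyb.2.2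
      have hy0 : 0 ≤ y := norm2pi_nonneg _
      have hy2 : y < 2*π := norm2pi_lt _
      have hyr : y ≠ r := by
        intro h
        have : norm2pi (r + τ) = norm2pi (r + 0) := by
          rw [add_zero, norm2pi_eq_self hr0 hr2]; exact h
        obtain ⟨k, hk⟩ := norm2pi_eq_imp this
        have hk0 : k = 0 := int_zero_of_small (by linarith) (by linarith)
        rw [hk0] at hk; push_cast at hk; linarith
      have memy : ∀ v, v ∈ SDist (insert a s) y ↔ 0 < v ∧ v < 2*π ∧ norm2pi (y + v) ∈ insert a s :=
        mem_sdist hC1 hy0 hy2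
      obtain ⟨m₁, hm₁r, hm₁y, hm₁min⟩ := H y hyC1 hyr
      have hm₁b := (memr m₁).mp hm₁r
      set σ := m - τ with hσdef
      have hσ0 : 0 < σ := by simp [hσdef]; linarith
      have hσ2 : σ < 2*π := by simp [hσdef]; linarith [hmb.2.1]
      -- σ ∈ S y
      have hσSy : σ ∈ SDist (insert a s) y := by
        rw [memy]
        refine ⟨hσ0, hσ2, ?_⟩
        have : norm2pi (y + σ) = norm2pi (r + m) := by
          rw [hydef, norm2pi_norm2pi_add]
          apply norm2pi_eq_of_sub 0
          push_cast; rw [hσdef]; ring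
        rw [this]; exact hmb.2.2
      -- σ ∉ S r
      have hσSr : σ ∉ SDist (insert a s) r := by
        intro hc
        apply hmx
        rw [memx]
        refine ⟨hmb.1, hmb.2.1, ?_⟩
        have : norm2pi (x + m) = norm2pi (r + σ) := by
          rw [← hxP, norm2pi_norm2pi_add]
          apply norm2pi_eq_of_sub 1
          push_cast; rw [hσdef, hτdef]; ring
        rw [this]
        exact ((memr σ).mp hc).2.2
      -- m₁ < σ
      have hm₁σ : m₁ < σ := by
        rcases lt_trichotomy m₁ σ with h | h | h
        · exact h
        · exact absurd (h ▸ hm₁r) hσSr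
        · exact absurd ((hm₁min σ h).mpr hσSy) hσSr
      -- contradiction: m₁ ∈ S y
      apply hm₁y
      have h1 : τ + m₁ < m := by linarith
      have hSx : τ + m₁ ∈ SDist (insert a s) x := by
        rw [memx]
        refine ⟨by linarith, by linarith [hmb.2.1], ?_⟩
        have : norm2pi (x + (τ + m₁)) = norm2pi (r + m₁) := by
          rw [← hxP, norm2pi_norm2pi_add]
          apply norm2pi_eq_of_sub 1
          push_cast; rw [hτdef]; ring
        rw [this]; exact hm₁b.2.2
      have hSr : τ + m₁ ∈ SDist (insert a s) r := (hmmin (τ + m₁) h1).mpr hSx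
      have hP : norm2pi (r + (τ + m₁)) ∈ insert a s := ((memr _).mp hSr).2.2
      rw [memy]
      refine ⟨hm₁b.1, hm₁b.2.1, ?_⟩
      have : norm2pi (y + m₁) = norm2pi (r + (τ + m₁)) := by
        rw [hydef, norm2pi_norm2pi_add]
        apply norm2pi_eq_of_sub 0
        push_cast; ring
      rw [this]; exact hP

/-- if a point other than the true leader is a confused leader then its
antipodal position is occupied. -/
theorem non_leader_confused_antipode_occupied
    (s : Finset ℝ) (hcirc : OnCircle s) (hasym : RotAsym s)
    (L : ℝ) (hL : IsTrueLeader s L)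
    (r : ℝ) (hrL : r ≠ L) (hconf : ConfusedLeader s r) :
    antip r ∈ s := by
  by_contra hna
  obtain ⟨hrs, hA0, hA1, hxor⟩ := hconf
  have hC0 : confC0 s r = s := Finset.erase_eq_of_notMem hna
  have hnot : ¬ IsTrueLeader s r := by
    intro hld
    have hLs := hL.1
    have h1 := hld.2 L hLs (Ne.symm hrL)
    have h2 := hL.2 r hrs hrL
    have hr' := hcirc r hrs
    have hL' := hcirc L hLs
    exact minDiff_asymm ((lex_iff_minDiff hcirc hr'.1 hr'.2 hL'.1 hL'.2).mp h1)
      ((lex_iff_minDiff hcirc hL'.1 hL'.2 hr'.1 hr'.2).mp h2)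
  rcases hxor with ⟨h0, _⟩ | ⟨h1, _⟩
  · rw [hC0] at h0
    exact hnot h0
  · exact hnot (core_lemma s hcirc r hrs hna h1)
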